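/- Let G be a finite group and L < H subgroups with L, H ∈ CD(G) such that the interval ⟦L,H⟧ in CD(G) is a quasi-antichain. If K1 and K2 are distinct atoms of this interval (that is, K1, K2 ∈ CD(G) with L < K_i < H and K1 ≠ K2), then K1 and K2 are each normalized by H, L is a normal subgroup of H, the commutator subgroup [K1, K2] is contained in L, and |K1|·|C_G(H)| = |L|·|C_G(K2)| (equivalently, the index of L in K1 equals the index of C_G(H) in C_G(K2)). -/

import Mathlib

/-- The Chermak-Delgado measure of a subgroup `H` of a finite group `G`:
`m_G(H) = |H| · |C_G(H)|`. -/
noncomputable def CDmeasure {G : Type*} [Group G] (H : Subgroup G) : ℕ :=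
  Nat.card H * Nat.card (Subgroup.centralizer (H : Set G))

/-- `H` belongs to the Chermak-Delgado lattice of `G`: its measure is maximal. -/
def inCD {G : Type*} [Group G] (H : Subgroup G) : Prop :=
  ∀ K : Subgroup G, CDmeasure K ≤ CDmeasure H

section CDAux

open scoped Pointwise

variable {G : Type*} [Group G]

private lemma cd_card_pos [Finite G] (A : Subgroup G) : 0 < Nat.card A :=
  @Nat.card_pos _ ⟨⟨1, A.one_mem⟩⟩ _

private lemma cd_measure_pos [Finite G] (A : Subgroup G) : 0 < CDmeasure A := by
  unfold CDmeasure
  exact Nat.mul_pos (cd_card_pos A) (cd_card_pos _)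

private lemma cd_card_le [Finite G] {A B : Subgroup G} (h : A ≤ B) :
    Nat.card A ≤ Nat.card B :=
  Nat.card_le_card_of_injective (Subgroup.inclusion h) (Subgroup.inclusion_injective h)

private lemma cd_eq_of_le_of_card_le [Finite G] {A B : Subgroup G} (h : A ≤ B)
    (hc : Nat.card B ≤ Nat.card A) : A = B := by
  apply SetLike.coe_injective
  refine Set.eq_of_subset_of_ncard_le h ?_ (Set.toFinite _)
  rw [← Nat.card_coe_set_eq, ← Nat.card_coe_set_eq]
  simpa using hc

/-- The product formula `|AB| * |A ⊓ B| = |A| * |B|`, via orbit-stabilizer. -/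
private lemma cd_prod_card (A B : Subgroup G) :
    Nat.card (↑A * ↑B : Set G) * Nat.card (A ⊓ B : Subgroup G) =
      Nat.card A * Nat.card B := by
  letI : SMul (A × B) G := ⟨fun p x => (p.1 : G) * x * (p.2 : G)⁻¹⟩
  letI : MulAction (A × B) G :=
    { one_smul := fun x => by
        show ((1 : A × B).1 : G) * x * ((1 : A × B).2 : G)⁻¹ = x
        simp
      mul_smul := fun p q x => by
        show ((p * q).1 : G) * x * (((p * q).2 : G))⁻¹ =
          (p.1 : G) * ((q.1 : G) * x * (q.2 : G)⁻¹) * (p.2 : G)⁻¹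
        simp [mul_assoc, mul_inv_rev] }
  have horb : MulAction.orbit (A × B) (1 : G) = (↑A * ↑B : Set G) := by
    ext g
    constructor
    · rintro ⟨p, rfl⟩
      refine ⟨(p.1 : G), p.1.2, (p.2 : G)⁻¹, inv_mem p.2.2, ?_⟩
      show (p.1 : G) * (p.2 : G)⁻¹ = (p.1 : G) * 1 * (p.2 : G)⁻¹
      rw [mul_one]
    · rintro ⟨a, ha, b, hb, rfl⟩
      refine ⟨(⟨⟨a, ha⟩, ⟨b⁻¹, inv_mem hb⟩⟩ : A × B), ?_⟩
      show a * 1 * (b⁻¹)⁻¹ = a * b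
      rw [mul_one, inv_inv]
  have hstab : Nat.card (MulAction.stabilizer (A × B) (1 : G)) =
      Nat.card (A ⊓ B : Subgroup G) := by
    have key : ∀ a : A, ∀ b : B,
        (⟨a, b⟩ : A × B) ∈ MulAction.stabilizer (A × B) (1 : G) → (a : G) = (b : G) := by
      intro a b hp
      have hp' : (a : G) * 1 * (b : G)⁻¹ = 1 := hp
      rwa [mul_one, mul_inv_eq_one] at hp'
    refine Nat.card_congr ⟨fun p => ⟨((p : A × B).1 : G), Subgroup.mem_inf.mpr
        ⟨(p : A × B).1.2, by rw [key (p : A × B).1 (p : A × B).2 p.2]; exact (p : A × B).2.2⟩⟩,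
      fun g => ⟨⟨⟨(g : G), (Subgroup.mem_inf.mp g.2).1⟩, ⟨(g : G), (Subgroup.mem_inf.mp g.2).2⟩⟩,
        show (g : G) * 1 * (g : G)⁻¹ = 1 by simp⟩, ?_, ?_⟩
    · rintro ⟨⟨a, b⟩, hp⟩
      have h := key a b hp
      apply Subtype.ext
      apply Prod.ext
      · rfl
      · exact Subtype.ext h
    · intro g
      rfl
  have h := Nat.card_congr (MulAction.orbitProdStabilizerEquivGroup (A × B) (1 : G))
  rw [Nat.card_prod, Nat.card_prod] at h
  rw [horb, hstab] at h
  exact h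

private lemma cd_mul_subset (A B : Subgroup G) :
    (↑A * ↑B : Set G) ⊆ ((A ⊔ B : Subgroup G) : Set G) := by
  rintro g ⟨a, ha, b, hb, rfl⟩
  exact mul_mem ((le_sup_left : A ≤ A ⊔ B) ha) ((le_sup_right : B ≤ A ⊔ B) hb)

private lemma cd_card_sup_inf [Finite G] (A B : Subgroup G) :
    Nat.card A * Nat.card B ≤
      Nat.card (A ⊔ B : Subgroup G) * Nat.card (A ⊓ B : Subgroup G) := by
  rw [← cd_prod_card A B]
  refine Nat.mul_le_mul_right _ ?_
  have h := Nat.card_mono (Set.toFinite ((A ⊔ B : Subgroup G) : Set G)) (cd_mul_subset A B)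
  simpa using h

private lemma cd_mem_centralizer_iff_le {x : G} {K : Subgroup G} :
    x ∈ Subgroup.centralizer (K : Set G) ↔ K ≤ Subgroup.centralizer {x} := by
  constructor
  · intro h g hg
    exact Subgroup.mem_centralizer_singleton_iff.mpr
      ((Subgroup.mem_centralizer_iff.mp h) g hg)
  · intro h
    rw [Subgroup.mem_centralizer_iff]
    intro g hg
    exact Subgroup.mem_centralizer_singleton_iff.mp (h hg)

private lemma cd_centralizer_sup (A B : Subgroup G) :
    Subgroup.centralizer ((A ⊔ B : Subgroup G) : Set G) =
      Subgroup.centralizer (A : Set G) ⊓ Subgroup.centralizer (B : Set G) := by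
  ext x
  rw [Subgroup.mem_inf, cd_mem_centralizer_iff_le, cd_mem_centralizer_iff_le,
    cd_mem_centralizer_iff_le, sup_le_iff]

private lemma cd_nat_eq {a a' b b' : ℕ} (ha : a ≤ a') (hb : b ≤ b')
    (h : a' * b' ≤ a * b) (ha0 : 0 < a') (hb0 : 0 < b') : a = a' ∧ b = b' := by
  have hbb : b' ≤ b := by
    have h2 : a' * b' ≤ a' * b := le_trans h (Nat.mul_le_mul ha (le_refl b))
    exact Nat.le_of_mul_le_mul_left h2 ha0
  have hbe : b = b' := le_antisymm hb hbb
  refine ⟨?_, hbe⟩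
  have h3 : a' * b' ≤ a * b' := hbe ▸ h
  have haa : a' ≤ a := Nat.le_of_mul_le_mul_right h3 hb0
  exact le_antisymm ha haa

/-- The key Chermak-Delgado lattice lemma: the join and meet of members are members,
the order product formula holds, and the set product equals the join. -/
private lemma cd_pair [Finite G] {A B : Subgroup G} (hA : inCD A) (hB : inCD B) :
    inCD (A ⊔ B) ∧ inCD (A ⊓ B) ∧
      Nat.card (A ⊔ B : Subgroup G) * Nat.card (A ⊓ B : Subgroup G) =
        Nat.card A * Nat.card B ∧
      (↑A * ↑B : Set G) = ((A ⊔ B : Subgroup G) : Set G) := by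
  have h1 := cd_card_sup_inf A B
  have h2 : Nat.card (Subgroup.centralizer (A : Set G)) *
        Nat.card (Subgroup.centralizer (B : Set G)) ≤
      Nat.card (Subgroup.centralizer ((A ⊓ B : Subgroup G) : Set G)) *
        Nat.card (Subgroup.centralizer ((A ⊔ B : Subgroup G) : Set G)) := by
    have hle : Subgroup.centralizer (A : Set G) ⊔ Subgroup.centralizer (B : Set G) ≤
        Subgroup.centralizer ((A ⊓ B : Subgroup G) : Set G) :=
      sup_le (Subgroup.centralizer_le (SetLike.coe_subset_coe.mpr inf_le_left))
        (Subgroup.centralizer_le (SetLike.coe_subset_coe.mpr inf_le_right))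
    calc Nat.card (Subgroup.centralizer (A : Set G)) *
          Nat.card (Subgroup.centralizer (B : Set G))
        ≤ Nat.card (Subgroup.centralizer (A : Set G) ⊔ Subgroup.centralizer (B : Set G) :
              Subgroup G) *
          Nat.card (Subgroup.centralizer (A : Set G) ⊓ Subgroup.centralizer (B : Set G) :
              Subgroup G) := cd_card_sup_inf _ _
      _ ≤ Nat.card (Subgroup.centralizer ((A ⊓ B : Subgroup G) : Set G)) *
          Nat.card (Subgroup.centralizer (A : Set G) ⊓ Subgroup.centralizer (B : Set G) :
              Subgroup G) := Nat.mul_le_mul_right _ (cd_card_le hle)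
      _ = Nat.card (Subgroup.centralizer ((A ⊓ B : Subgroup G) : Set G)) *
          Nat.card (Subgroup.centralizer ((A ⊔ B : Subgroup G) : Set G)) := by
            rw [cd_centralizer_sup]
  have big : CDmeasure A * CDmeasure B ≤ CDmeasure (A ⊔ B) * CDmeasure (A ⊓ B) := by
    unfold CDmeasure
    calc (Nat.card A * Nat.card (Subgroup.centralizer (A : Set G))) *
          (Nat.card B * Nat.card (Subgroup.centralizer (B : Set G)))
        = (Nat.card A * Nat.card B) *
          (Nat.card (Subgroup.centralizer (A : Set G)) *
            Nat.card (Subgroup.centralizer (B : Set G))) := by ring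
      _ ≤ (Nat.card (A ⊔ B : Subgroup G) * Nat.card (A ⊓ B : Subgroup G)) *
          (Nat.card (Subgroup.centralizer ((A ⊓ B : Subgroup G) : Set G)) *
            Nat.card (Subgroup.centralizer ((A ⊔ B : Subgroup G) : Set G))) :=
          Nat.mul_le_mul h1 h2
      _ = (Nat.card (A ⊔ B : Subgroup G) *
            Nat.card (Subgroup.centralizer ((A ⊔ B : Subgroup G) : Set G))) *
          (Nat.card (A ⊓ B : Subgroup G) *
            Nat.card (Subgroup.centralizer ((A ⊓ B : Subgroup G) : Set G))) := by ring
  have small : CDmeasure (A ⊔ B) * CDmeasure (A ⊓ B) ≤ CDmeasure A * CDmeasure B :=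
    Nat.mul_le_mul (hA _) (hB _)
  have hmeq : CDmeasure (A ⊔ B) * CDmeasure (A ⊓ B) = CDmeasure A * CDmeasure B :=
    le_antisymm small big
  obtain ⟨hJm, hMm⟩ := cd_nat_eq (hA (A ⊔ B)) (hB (A ⊓ B)) hmeq.ge
    (cd_measure_pos A) (cd_measure_pos B)
  have hinJ : inCD (A ⊔ B) := fun K => le_of_le_of_eq (hA K) hJm.symm
  have hinM : inCD (A ⊓ B) := fun K => le_of_le_of_eq (hB K) hMm.symm
  -- now extract the card equality
  have hinner : (Nat.card (A ⊔ B : Subgroup G) * Nat.card (A ⊓ B : Subgroup G)) *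
      (Nat.card (Subgroup.centralizer ((A ⊓ B : Subgroup G) : Set G)) *
        Nat.card (Subgroup.centralizer ((A ⊔ B : Subgroup G) : Set G))) =
      (Nat.card A * Nat.card B) *
      (Nat.card (Subgroup.centralizer (A : Set G)) *
        Nat.card (Subgroup.centralizer (B : Set G))) := by
    calc (Nat.card (A ⊔ B : Subgroup G) * Nat.card (A ⊓ B : Subgroup G)) *
          (Nat.card (Subgroup.centralizer ((A ⊓ B : Subgroup G) : Set G)) *
            Nat.card (Subgroup.centralizer ((A ⊔ B : Subgroup G) : Set G)))
        = CDmeasure (A ⊔ B) * CDmeasure (A ⊓ B) := by unfold CDmeasure; ring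
      _ = CDmeasure A * CDmeasure B := hmeq
      _ = (Nat.card A * Nat.card B) *
          (Nat.card (Subgroup.centralizer (A : Set G)) *
            Nat.card (Subgroup.centralizer (B : Set G))) := by unfold CDmeasure; ring
  obtain ⟨hcards, -⟩ := cd_nat_eq h1 h2 hinner.le
    (Nat.mul_pos (cd_card_pos _) (cd_card_pos _))
    (Nat.mul_pos (cd_card_pos _) (cd_card_pos _))
  -- hcards : Nat.card A * Nat.card B = Nat.card (A ⊔ B) * Nat.card (A ⊓ B)
  have hcard : Nat.card (A ⊔ B : Subgroup G) * Nat.card (A ⊓ B : Subgroup G) =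
      Nat.card A * Nat.card B := hcards.symm
  refine ⟨hinJ, hinM, hcard, ?_⟩
  have hprodcard : Nat.card (↑A * ↑B : Set G) = Nat.card (A ⊔ B : Subgroup G) :=
    Nat.eq_of_mul_eq_mul_right (cd_card_pos (A ⊓ B))
      (by rw [cd_prod_card, ← hcard])
  have hncard : ((A ⊔ B : Subgroup G) : Set G).ncard ≤ (↑A * ↑B : Set G).ncard := by
    rw [← Nat.card_coe_set_eq, ← Nat.card_coe_set_eq]
    have : Nat.card ((A ⊔ B : Subgroup G) : Set G) = Nat.card (A ⊔ B : Subgroup G) := by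
      simp
    rw [this, ← hprodcard]
  exact Set.eq_of_subset_of_ncard_le (cd_mul_subset A B) hncard (Set.toFinite _)

/-! ### Conjugation -/

/-- Conjugation of a subgroup: `cj x A = x A x⁻¹`. -/
private def cj (x : G) (A : Subgroup G) : Subgroup G :=
  A.map (MulAut.conj x).toMonoidHom

private lemma mem_cj {x y : G} {A : Subgroup G} : y ∈ cj x A ↔ x⁻¹ * y * x ∈ A := by
  simp only [cj, Subgroup.mem_map, MulEquiv.coe_toMonoidHom, MulAut.conj_apply]
  constructor
  · rintro ⟨a, ha, rfl⟩
    have e : x⁻¹ * (x * a * x⁻¹) * x = a := by group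
    rwa [e]
  · intro h
    exact ⟨x⁻¹ * y * x, h, by group⟩

private lemma cj_cj (u v : G) (A : Subgroup G) : cj u (cj v A) = cj (u * v) A := by
  ext y
  rw [mem_cj, mem_cj, mem_cj]
  have e : v⁻¹ * (u⁻¹ * y * u) * v = (u * v)⁻¹ * y * (u * v) := by group
  rw [e]

private lemma cj_one (A : Subgroup G) : cj 1 A = A := by
  ext y
  rw [mem_cj]
  simp

private lemma cj_self {x : G} {A : Subgroup G} (hx : x ∈ A) : cj x A = A := by
  ext y
  rw [mem_cj]
  constructor
  · intro h
    have h2 := mul_mem (mul_mem hx h) (inv_mem hx)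
    have e : x * (x⁻¹ * y * x) * x⁻¹ = y := by group
    rwa [e] at h2
  · intro h
    exact mul_mem (mul_mem (inv_mem hx) h) hx

private lemma cj_le {x : G} {A H : Subgroup G} (hx : x ∈ H) (hA : A ≤ H) :
    cj x A ≤ H := by
  intro y hy
  rw [mem_cj] at hy
  have h2 := mul_mem (mul_mem hx (hA hy)) (inv_mem hx)
  have e : x * (x⁻¹ * y * x) * x⁻¹ = y := by group
  rwa [e] at h2

private lemma cj_inf (x : G) (A B : Subgroup G) : cj x (A ⊓ B) = cj x A ⊓ cj x B := by
  ext y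
  rw [Subgroup.mem_inf, mem_cj, mem_cj, mem_cj, Subgroup.mem_inf]

private lemma cd_card_cj (x : G) (A : Subgroup G) : Nat.card (cj x A) = Nat.card A :=
  (Nat.card_congr (A.equivMapOfInjective (MulAut.conj x).toMonoidHom
    (MulAut.conj x).injective).toEquiv).symm

private lemma cd_centralizer_cj (x : G) (A : Subgroup G) :
    Subgroup.centralizer ((cj x A : Subgroup G) : Set G) =
      cj x (Subgroup.centralizer (A : Set G)) := by
  ext y
  rw [mem_cj, Subgroup.mem_centralizer_iff, Subgroup.mem_centralizer_iff]
  constructor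
  · intro hy a ha
    have hmem : x * a * x⁻¹ ∈ (cj x A : Subgroup G) := by
      rw [mem_cj]
      have e : x⁻¹ * (x * a * x⁻¹) * x = a := by group
      rwa [e]
    have key := hy (x * a * x⁻¹) hmem
    calc a * (x⁻¹ * y * x) = x⁻¹ * ((x * a * x⁻¹) * y) * x := by group
      _ = x⁻¹ * (y * (x * a * x⁻¹)) * x := by rw [key]
      _ = (x⁻¹ * y * x) * a := by group
  · intro hy h hh
    have hh' : x⁻¹ * h * x ∈ A := mem_cj.mp hh
    have key := hy (x⁻¹ * h * x) hh'
    calc h * y = x * ((x⁻¹ * h * x) * (x⁻¹ * y * x)) * x⁻¹ := by group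
      _ = x * ((x⁻¹ * y * x) * (x⁻¹ * h * x)) * x⁻¹ := by rw [key]
      _ = y * h := by group

private lemma cd_measure_cj (x : G) (A : Subgroup G) :
    CDmeasure (cj x A) = CDmeasure A := by
  unfold CDmeasure
  rw [cd_centralizer_cj, cd_card_cj, cd_card_cj]

private lemma cd_inCD_cj {A : Subgroup G} (hA : inCD A) (x : G) : inCD (cj x A) := by
  intro K
  rw [cd_measure_cj]
  calc CDmeasure K = CDmeasure (cj x⁻¹ K) := (cd_measure_cj x⁻¹ K).symm
    _ ≤ CDmeasure A := hA _

private lemma cd_norm_of_cj {H K : Subgroup G} (h : ∀ x ∈ H, cj x K = K) :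
    H ≤ Subgroup.normalizer (K : Set G) := by
  intro x hx
  rw [Subgroup.mem_normalizer_iff]
  intro g
  constructor
  · intro hg
    have hmem : x * g * x⁻¹ ∈ cj x K := by
      rw [mem_cj]
      have e : x⁻¹ * (x * g * x⁻¹) * x = g := by group
      rwa [e]
    rwa [h x hx] at hmem
  · intro hg
    have hmem : g ∈ cj x⁻¹ K := by
      rw [mem_cj]
      have e : (x⁻¹)⁻¹ * g * x⁻¹ = x * g * x⁻¹ := by group
      rwa [e]
    rwa [h x⁻¹ (inv_mem hx)] at hmem

end CDAux

open scoped Pointwise in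
/-- if the interval `⟦L,H⟧` in `CD(G)` is a quasi-antichain and
`K1 ≠ K2` are atoms of the interval, then `K1`, `K2` are normalized by `H`,
`L` is normal in `H`, `[K1,K2] ≤ L`, and `|K1|·|C_G(H)| = |L|·|C_G(K2)|`,
equivalently `|K1 : L| = |C_G(K2) : C_G(H)|`. -/
theorem stmt1 {G : Type*} [Group G] [Finite G] (L H : Subgroup G) (hLH : L < H)
    (hL : inCD L) (hH : inCD H)
    (hqa : ∀ K K' : Subgroup G, inCD K → inCD K' → L < K → K ≤ K' → K' < H → K = K')
    (K1 K2 : Subgroup G) (hK1 : inCD K1) (hK2 : inCD K2)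
    (hK1L : L < K1) (hK1H : K1 < H) (hK2L : L < K2) (hK2H : K2 < H)
    (hne : K1 ≠ K2) :
    H ≤ Subgroup.normalizer (K1 : Set G) ∧ H ≤ Subgroup.normalizer (K2 : Set G) ∧
    H ≤ Subgroup.normalizer (L : Set G) ∧
    ⁅K1, K2⁆ ≤ L ∧
    Nat.card K1 * Nat.card (Subgroup.centralizer (H : Set G)) =
      Nat.card L * Nat.card (Subgroup.centralizer (K2 : Set G)) ∧
    L.relIndex K1 =
      (Subgroup.centralizer (H : Set G)).relIndex (Subgroup.centralizer (K2 : Set G)) := by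
  obtain ⟨hJcd, hMcd, hcardJM, -⟩ := cd_pair hK1 hK2
  -- Step A : K1 ⊔ K2 = H
  have hJoin : K1 ⊔ K2 = H := by
    by_contra hne'
    have hlt : K1 ⊔ K2 < H := lt_of_le_of_ne (sup_le hK1H.le hK2H.le) hne'
    have h1 : K1 = K1 ⊔ K2 := hqa K1 (K1 ⊔ K2) hK1 hJcd hK1L le_sup_left hlt
    have h2 : K2 ≤ K1 := le_sup_right.trans h1.ge
    exact hne ((hqa K2 K1 hK2 hK1 hK2L h2 hK1H).symm)
  -- Step B : K1 ⊓ K2 = L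
  have hMeet : K1 ⊓ K2 = L := by
    by_contra hne'
    have hle : L ≤ K1 ⊓ K2 := le_inf hK1L.le hK2L.le
    have hlt : L < K1 ⊓ K2 := lt_of_le_of_ne hle (fun h => hne' h.symm)
    have h1 : K1 ⊓ K2 = K1 := hqa (K1 ⊓ K2) K1 hMcd hK1 hlt inf_le_left hK1H
    have h2 : K1 ≤ K2 := h1.symm.le.trans inf_le_right
    exact hne (hqa K1 K2 hK1 hK2 hK1L h2 hK2H)
  -- Normality of atoms in H
  have hnormal : ∀ K : Subgroup G, inCD K → L < K → K < H → ∀ x ∈ H, cj x K = K := by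
    intro K hK hKL hKH x hx
    by_contra hne'
    have hE : inCD (cj x K) := cd_inCD_cj hK x
    have hEH : cj x K ≤ H := cj_le hx hKH.le
    have hEcard : Nat.card (cj x K) = Nat.card K := cd_card_cj x K
    obtain ⟨hJcd', -, -, hprod'⟩ := cd_pair hE hK
    have hJ : cj x K ⊔ K = H := by
      by_contra hne''
      have hlt : cj x K ⊔ K < H := lt_of_le_of_ne (sup_le hEH hKH.le) hne''
      have h1 : K = cj x K ⊔ K := hqa K (cj x K ⊔ K) hK hJcd' hKL le_sup_right hlt
      have h2 : cj x K ≤ K := le_sup_left.trans h1.ge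
      exact hne' (cd_eq_of_le_of_card_le h2 (by rw [hEcard]))
    have hxm : x ∈ (↑(cj x K) * ↑K : Set G) := by
      rw [hprod', hJ]
      exact hx
    obtain ⟨e, he, a, ha, hea⟩ := hxm
    have he' : e ∈ cj x K := he
    have ha' : a ∈ K := ha
    have hea' : e * a = x := hea
    have hkey : cj e K = cj x K := by
      calc cj e K = cj e (cj a K) := by rw [cj_self ha']
        _ = cj (e * a) K := cj_cj e a K
        _ = cj x K := by rw [hea']
    have h1 : cj e⁻¹ (cj e K) = K := by
      rw [cj_cj, inv_mul_cancel, cj_one]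
    rw [hkey] at h1
    have h2 : cj e⁻¹ (cj x K) = cj x K := cj_self (inv_mem he')
    exact hne' (h2.symm.trans h1)
  have hnorm1 : ∀ x ∈ H, cj x K1 = K1 := hnormal K1 hK1 hK1L hK1H
  have hnorm2 : ∀ x ∈ H, cj x K2 = K2 := hnormal K2 hK2 hK2L hK2H
  have hn1 : H ≤ Subgroup.normalizer (K1 : Set G) := cd_norm_of_cj hnorm1
  have hn2 : H ≤ Subgroup.normalizer (K2 : Set G) := cd_norm_of_cj hnorm2
  have hnormL : ∀ x ∈ H, cj x L = L := by
    intro x hx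
    rw [← hMeet, cj_inf, hnorm1 x hx, hnorm2 x hx]
  have hn3 : H ≤ Subgroup.normalizer (L : Set G) := cd_norm_of_cj hnormL
  -- commutator
  have hcomm : ⁅K1, K2⁆ ≤ L := by
    rw [Subgroup.commutator_le]
    intro a ha b hb
    rw [← hMeet, Subgroup.mem_inf]
    constructor
    · have hbH : b ∈ H := hK2H.le hb
      have h1 : b * a⁻¹ * b⁻¹ ∈ cj b K1 := by
        rw [mem_cj]
        have e : b⁻¹ * (b * a⁻¹ * b⁻¹) * b = a⁻¹ := by group
        rw [e]
        exact inv_mem ha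
      rw [hnorm1 b hbH] at h1
      open scoped commutatorElement in
      have e2 : ⁅a, b⁆ = a * (b * a⁻¹ * b⁻¹) := by
        rw [commutatorElement_def]; group
      rw [e2]
      exact mul_mem ha h1
    · have haH : a ∈ H := hK1H.le ha
      have h1 : a * b * a⁻¹ ∈ cj a K2 := by
        rw [mem_cj]
        have e : a⁻¹ * (a * b * a⁻¹) * a = b := by group
        rw [e]
        exact hb
      rw [hnorm2 a haH] at h1
      open scoped commutatorElement in
      have e2 : ⁅a, b⁆ = (a * b * a⁻¹) * b⁻¹ := by
        rw [commutatorElement_def]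
      rw [e2]
      exact mul_mem h1 (inv_mem hb)
  -- arithmetic
  have hc12 : Nat.card K1 * Nat.card K2 = Nat.card H * Nat.card L := by
    rw [← hJoin, ← hMeet]
    exact hcardJM.symm
  have hm2 : Nat.card K2 * Nat.card (Subgroup.centralizer (K2 : Set G)) =
      Nat.card H * Nat.card (Subgroup.centralizer (H : Set G)) := by
    have h := le_antisymm (hH K2) (hK2 H)
    unfold CDmeasure at h
    exact h
  have goal5 : Nat.card K1 * Nat.card (Subgroup.centralizer (H : Set G)) =
      Nat.card L * Nat.card (Subgroup.centralizer (K2 : Set G)) := by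
    apply Nat.eq_of_mul_eq_mul_right (cd_card_pos K2)
    calc Nat.card K1 * Nat.card (Subgroup.centralizer (H : Set G)) * Nat.card K2
        = (Nat.card K1 * Nat.card K2) * Nat.card (Subgroup.centralizer (H : Set G)) := by
          ring
      _ = (Nat.card H * Nat.card L) * Nat.card (Subgroup.centralizer (H : Set G)) := by
          rw [hc12]
      _ = Nat.card L * (Nat.card H * Nat.card (Subgroup.centralizer (H : Set G))) := by
          ring
      _ = Nat.card L * (Nat.card K2 * Nat.card (Subgroup.centralizer (K2 : Set G))) := by
          rw [hm2]
      _ = Nat.card L * Nat.card (Subgroup.centralizer (K2 : Set G)) * Nat.card K2 := by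
          ring
  -- relindex form
  have hLK1 : L ≤ K1 := hK1L.le
  have hcHcK2 : Subgroup.centralizer (H : Set G) ≤ Subgroup.centralizer (K2 : Set G) :=
    Subgroup.centralizer_le (SetLike.coe_subset_coe.mpr hK2H.le)
  have hr1 : Nat.card L * L.relIndex K1 = Nat.card K1 := by
    have h := Subgroup.card_mul_index (L.subgroupOf K1)
    rwa [Nat.card_congr (Subgroup.subgroupOfEquivOfLe hLK1).toEquiv] at h
  have hr2 : Nat.card (Subgroup.centralizer (H : Set G)) *
      (Subgroup.centralizer (H : Set G)).relIndex (Subgroup.centralizer (K2 : Set G)) =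
      Nat.card (Subgroup.centralizer (K2 : Set G)) := by
    have h := Subgroup.card_mul_index
      ((Subgroup.centralizer (H : Set G)).subgroupOf (Subgroup.centralizer (K2 : Set G)))
    rwa [Nat.card_congr (Subgroup.subgroupOfEquivOfLe hcHcK2).toEquiv] at h
  have goal6 : L.relIndex K1 =
      (Subgroup.centralizer (H : Set G)).relIndex (Subgroup.centralizer (K2 : Set G)) := by
    apply Nat.eq_of_mul_eq_mul_left
      (Nat.mul_pos (cd_card_pos L) (cd_card_pos (Subgroup.centralizer (H : Set G))))
    calc (Nat.card L * Nat.card (Subgroup.centralizer (H : Set G))) * L.relIndex K1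
        = (Nat.card L * L.relIndex K1) * Nat.card (Subgroup.centralizer (H : Set G)) := by
          ring
      _ = Nat.card K1 * Nat.card (Subgroup.centralizer (H : Set G)) := by rw [hr1]
      _ = Nat.card L * Nat.card (Subgroup.centralizer (K2 : Set G)) := goal5
      _ = Nat.card L * (Nat.card (Subgroup.centralizer (H : Set G)) *
            (Subgroup.centralizer (H : Set G)).relIndex
              (Subgroup.centralizer (K2 : Set G))) := by rw [hr2]
      _ = (Nat.card L * Nat.card (Subgroup.centralizer (H : Set G))) *
            (Subgroup.centralizer (H : Set G)).relIndex
              (Subgroup.centralizer (K2 : Set G)) := by ring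
  exact ⟨hn1, hn2, hn3, hcomm, goal5, goal6⟩
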